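/- arXiv:2107.04418 — 4 statements merged into one kernel-verified Lean document; each statement's English description precedes it below -/
import Mathlib

section
/- For any pair of integers (m,n), there exists a constant C = C(m,n) > 0 such that for every bounded sequence θ : ℤ → ℝ one has ‖n^2[(S^m - I)θ]^2 - m^2[(S^n - I)θ]^2‖_{ℓ^∞} ≤ C ‖∂^{(2)}θ‖_{ℓ^∞} · ‖∂θ‖_{ℓ^∞}, where squares are taken pointwise. -/
/-- Drift of first differences is controlled by the second difference bound. -/
lemma stmt3_aux1 (θ : ℤ → ℝ) (D2 : ℝ)
    (h2 : ∀ j : ℤ, |θ (j + 2) - 2 * θ (j + 1) + θ j| ≤ D2) (j : ℤ) :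
    ∀ k : ℤ, |θ (j + k + 1) - θ (j + k) - (θ (j + 1) - θ j)| ≤ |(k : ℝ)| * D2 := by
  intro k
  induction k using Int.induction_on with
  | zero => simp
  | succ i ih =>
      have e1 : j + ((i : ℤ) + 1) + 1 = j + (i : ℤ) + 2 := by ring
      have e2 : j + ((i : ℤ) + 1) = j + (i : ℤ) + 1 := by ring
      rw [e1, e2]
      have h := h2 (j + (i : ℤ))
      have key : θ (j + (i : ℤ) + 2) - θ (j + (i : ℤ) + 1) - (θ (j + 1) - θ j)
          = (θ (j + (i : ℤ) + 2) - 2 * θ (j + (i : ℤ) + 1) + θ (j + (i : ℤ)))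
            + (θ (j + (i : ℤ) + 1) - θ (j + (i : ℤ)) - (θ (j + 1) - θ j)) := by ring
      rw [key]
      refine le_trans (abs_add_le _ _) (le_trans (add_le_add h ih) ?_)
      have c1 : |(((i : ℤ) + 1 : ℤ) : ℝ)| = (i : ℝ) + 1 := by
        rw [show (((i : ℤ) + 1 : ℤ) : ℝ) = (i : ℝ) + 1 by push_cast; ring,
          abs_of_nonneg (by positivity)]
      have c2 : |(((i : ℤ) : ℤ) : ℝ)| = (i : ℝ) := by
        rw [show (((i : ℤ) : ℤ) : ℝ) = (i : ℝ) by push_cast; ring,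
          abs_of_nonneg (by positivity)]
      rw [c1, c2]
      ring_nf
      linarith
  | pred i ih =>
      have e1 : j + (-(i : ℤ) - 1) + 1 = j - (i : ℤ) - 1 + 1 := by ring
      have e2 : j + (-(i : ℤ) - 1) = j - (i : ℤ) - 1 := by ring
      rw [e1, e2]
      have e3 : j + -(i : ℤ) + 1 = j - (i : ℤ) - 1 + 2 := by ring
      have e4 : j + -(i : ℤ) = j - (i : ℤ) - 1 + 1 := by ring
      rw [e3, e4] at ih
      have h := h2 (j - (i : ℤ) - 1)
      have key : θ (j - (i : ℤ) - 1 + 1) - θ (j - (i : ℤ) - 1) - (θ (j + 1) - θ j)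
          = (θ (j - (i : ℤ) - 1 + 2) - θ (j - (i : ℤ) - 1 + 1) - (θ (j + 1) - θ j))
            - (θ (j - (i : ℤ) - 1 + 2) - 2 * θ (j - (i : ℤ) - 1 + 1) + θ (j - (i : ℤ) - 1)) := by
        ring
      rw [key]
      refine le_trans (abs_sub _ _) (le_trans (add_le_add ih h) ?_)
      have c1 : |((-(i : ℤ) - 1 : ℤ) : ℝ)| = (i : ℝ) + 1 := by
        rw [show ((-(i : ℤ) - 1 : ℤ) : ℝ) = -((i : ℝ) + 1) by push_cast; ring,
          abs_neg, abs_of_nonneg (by positivity)]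
      have c2 : |((-(i : ℤ) : ℤ) : ℝ)| = (i : ℝ) := by
        rw [show ((-(i : ℤ) : ℤ) : ℝ) = -(i : ℝ) by push_cast; ring,
          abs_neg, abs_of_nonneg (by positivity)]
      rw [c1, c2]
      linarith

/-- Taylor-type remainder: `θ(j+k) - θ(j) - k·∂θ(j)` is `O(k² ‖∂²θ‖)`. -/
lemma stmt3_aux2 (θ : ℤ → ℝ) (D2 : ℝ)
    (h2 : ∀ j : ℤ, |θ (j + 2) - 2 * θ (j + 1) + θ j| ≤ D2) (j : ℤ) :
    ∀ k : ℤ, |θ (j + k) - θ j - (k : ℝ) * (θ (j + 1) - θ j)| ≤ (k : ℝ) ^ 2 * D2 := by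
  have hD2 : 0 ≤ D2 := le_trans (abs_nonneg _) (h2 0)
  intro k
  induction k using Int.induction_on with
  | zero => simp
  | succ i ih =>
      have A := stmt3_aux1 θ D2 h2 j (i : ℤ)
      have e1 : j + ((i : ℤ) + 1) = j + (i : ℤ) + 1 := by ring
      rw [e1]
      have key : θ (j + (i : ℤ) + 1) - θ j - (((i : ℤ) + 1 : ℤ) : ℝ) * (θ (j + 1) - θ j)
          = (θ (j + (i : ℤ)) - θ j - (((i : ℤ) : ℤ) : ℝ) * (θ (j + 1) - θ j))
            + (θ (j + (i : ℤ) + 1) - θ (j + (i : ℤ)) - (θ (j + 1) - θ j)) := by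
        push_cast; ring
      rw [key]
      refine le_trans (abs_add_le _ _) (le_trans (add_le_add ih A) ?_)
      have hi : (0 : ℝ) ≤ (i : ℝ) := by positivity
      have c2 : |(((i : ℤ) : ℤ) : ℝ)| = (i : ℝ) := by
        rw [show (((i : ℤ) : ℤ) : ℝ) = (i : ℝ) by push_cast; ring, abs_of_nonneg hi]
      rw [c2]
      push_cast
      nlinarith
  | pred i ih =>
      have A := stmt3_aux1 θ D2 h2 j (-(i : ℤ) - 1)
      have e0 : j + (-(i : ℤ) - 1) + 1 = j + -(i : ℤ) := by ring
      rw [e0] at A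
      have c1 : |((-(i : ℤ) - 1 : ℤ) : ℝ)| = (i : ℝ) + 1 := by
        rw [show ((-(i : ℤ) - 1 : ℤ) : ℝ) = -((i : ℝ) + 1) by push_cast; ring,
          abs_neg, abs_of_nonneg (by positivity)]
      rw [c1] at A
      have key : θ (j + (-(i : ℤ) - 1)) - θ j - ((-(i : ℤ) - 1 : ℤ) : ℝ) * (θ (j + 1) - θ j)
          = (θ (j + -(i : ℤ)) - θ j - ((-(i : ℤ) : ℤ) : ℝ) * (θ (j + 1) - θ j))
            - (θ (j + -(i : ℤ)) - θ (j + (-(i : ℤ) - 1)) - (θ (j + 1) - θ j)) := by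
        push_cast; ring
      rw [key]
      refine le_trans (abs_sub _ _) (le_trans (add_le_add ih A) ?_)
      have hi : (0 : ℝ) ≤ (i : ℝ) := by positivity
      push_cast
      nlinarith

/-- Lipschitz bound: `|θ(j+k) - θ(j)| ≤ |k| ‖∂θ‖`. -/
lemma stmt3_aux3 (θ : ℤ → ℝ) (D1 : ℝ)
    (h1 : ∀ j : ℤ, |θ (j + 1) - θ j| ≤ D1) (j : ℤ) :
    ∀ k : ℤ, |θ (j + k) - θ j| ≤ |(k : ℝ)| * D1 := by
  have hD1 : 0 ≤ D1 := le_trans (abs_nonneg _) (h1 0)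
  intro k
  induction k using Int.induction_on with
  | zero => simp
  | succ i ih =>
      have e1 : j + ((i : ℤ) + 1) = j + (i : ℤ) + 1 := by ring
      rw [e1]
      have h := h1 (j + (i : ℤ))
      have key : θ (j + (i : ℤ) + 1) - θ j
          = (θ (j + (i : ℤ)) - θ j) + (θ (j + (i : ℤ) + 1) - θ (j + (i : ℤ))) := by ring
      rw [key]
      refine le_trans (abs_add_le _ _) (le_trans (add_le_add ih h) ?_)
      have hi : (0 : ℝ) ≤ (i : ℝ) := by positivity
      have c1 : |(((i : ℤ) + 1 : ℤ) : ℝ)| = (i : ℝ) + 1 := by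
        rw [show (((i : ℤ) + 1 : ℤ) : ℝ) = (i : ℝ) + 1 by push_cast; ring,
          abs_of_nonneg (by positivity)]
      have c2 : |(((i : ℤ) : ℤ) : ℝ)| = (i : ℝ) := by
        rw [show (((i : ℤ) : ℤ) : ℝ) = (i : ℝ) by push_cast; ring, abs_of_nonneg hi]
      rw [c1, c2]
      linarith
  | pred i ih =>
      have h := h1 (j + (-(i : ℤ) - 1))
      have e0 : j + (-(i : ℤ) - 1) + 1 = j + -(i : ℤ) := by ring
      rw [e0] at h
      have key : θ (j + (-(i : ℤ) - 1)) - θ j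
          = (θ (j + -(i : ℤ)) - θ j) - (θ (j + -(i : ℤ)) - θ (j + (-(i : ℤ) - 1))) := by ring
      rw [key]
      refine le_trans (abs_sub _ _) (le_trans (add_le_add ih h) ?_)
      have hi : (0 : ℝ) ≤ (i : ℝ) := by positivity
      have c1 : |((-(i : ℤ) - 1 : ℤ) : ℝ)| = (i : ℝ) + 1 := by
        rw [show ((-(i : ℤ) - 1 : ℤ) : ℝ) = -((i : ℝ) + 1) by push_cast; ring,
          abs_neg, abs_of_nonneg (by positivity)]
      have c2 : |((-(i : ℤ) : ℤ) : ℝ)| = (i : ℝ) := by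
        rw [show ((-(i : ℤ) : ℤ) : ℝ) = -(i : ℝ) by push_cast; ring,
          abs_neg, abs_of_nonneg hi]
      rw [c1, c2]
      linarith

/-- For any integers `m, n` there is `C = C(m,n) > 0` such that for every
bounded sequence `θ : ℤ → ℝ`:
`‖n² [(S^m - I)θ]² - m² [(S^n - I)θ]²‖_∞ ≤ C ‖∂^{(2)}θ‖_∞ ‖∂θ‖_∞`,
squares taken pointwise.  Sup-norms are encoded via uniform bounds `D1, D2`. -/
theorem stmt3 (m n : ℤ) :
    ∃ C : ℝ, 0 < C ∧ ∀ θ : ℤ → ℝ, ∀ D1 D2 : ℝ,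
      (∀ j : ℤ, |θ (j + 1) - θ j| ≤ D1) →
      (∀ j : ℤ, |θ (j + 2) - 2 * θ (j + 1) + θ j| ≤ D2) →
      ∀ j : ℤ,
        |(n : ℝ) ^ 2 * (θ (j + m) - θ j) ^ 2 - (m : ℝ) ^ 2 * (θ (j + n) - θ j) ^ 2|
          ≤ C * D2 * D1 := by
  refine ⟨4 * (|(n : ℝ)| ^ 2 * |(m : ℝ)| ^ 3 + |(m : ℝ)| ^ 2 * |(n : ℝ)| ^ 3) + 1,
    by positivity, ?_⟩
  intro θ D1 D2 h1 h2 j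
  have hD1 : 0 ≤ D1 := le_trans (abs_nonneg _) (h1 0)
  have hD2 : 0 ≤ D2 := le_trans (abs_nonneg _) (h2 0)
  set δ := θ (j + 1) - θ j with hδdef
  set a := θ (j + m) - θ j with hadef
  set b := θ (j + n) - θ j with hbdef
  have hδ : |δ| ≤ D1 := h1 j
  have hRm2 : |a - (m : ℝ) * δ| ≤ |(m : ℝ)| ^ 2 * D2 := by
    have h := stmt3_aux2 θ D2 h2 j m
    rw [← sq_abs (m : ℝ)] at h
    exact h
  have hRn2 : |b - (n : ℝ) * δ| ≤ |(n : ℝ)| ^ 2 * D2 := by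
    have h := stmt3_aux2 θ D2 h2 j n
    rw [← sq_abs (n : ℝ)] at h
    exact h
  have ham : |a| ≤ |(m : ℝ)| * D1 := stmt3_aux3 θ D1 h1 j m
  have hbn : |b| ≤ |(n : ℝ)| * D1 := stmt3_aux3 θ D1 h1 j n
  have hRm1 : |a - (m : ℝ) * δ| ≤ 2 * |(m : ℝ)| * D1 := by
    refine le_trans (abs_sub _ _) ?_
    rw [abs_mul]
    have : |(m : ℝ)| * |δ| ≤ |(m : ℝ)| * D1 :=
      mul_le_mul_of_nonneg_left hδ (abs_nonneg _)
    linarith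
  have hRn1 : |b - (n : ℝ) * δ| ≤ 2 * |(n : ℝ)| * D1 := by
    refine le_trans (abs_sub _ _) ?_
    rw [abs_mul]
    have : |(n : ℝ)| * |δ| ≤ |(n : ℝ)| * D1 :=
      mul_le_mul_of_nonneg_left hδ (abs_nonneg _)
    linarith
  set Rm := a - (m : ℝ) * δ with hRmdef
  set Rn := b - (n : ℝ) * δ with hRndef
  have key : (n : ℝ) ^ 2 * a ^ 2 - (m : ℝ) ^ 2 * b ^ 2
      = 2 * ((m : ℝ) * (n : ℝ) ^ 2) * (δ * Rm) + (n : ℝ) ^ 2 * (Rm * Rm)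
        - 2 * ((n : ℝ) * (m : ℝ) ^ 2) * (δ * Rn) - (m : ℝ) ^ 2 * (Rn * Rn) := by
    rw [hRmdef, hRndef]; ring
  rw [key]
  have tX : |2 * ((m : ℝ) * (n : ℝ) ^ 2) * (δ * Rm)|
      ≤ 2 * (|(m : ℝ)| * |(n : ℝ)| ^ 2) * (D1 * (|(m : ℝ)| ^ 2 * D2)) := by
    rw [abs_mul, abs_mul, abs_mul, abs_mul, abs_pow, abs_two]
    gcongr <;> first | exact hδ | exact hRm2 | exact abs_nonneg _
  have tY : |(n : ℝ) ^ 2 * (Rm * Rm)|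
      ≤ |(n : ℝ)| ^ 2 * ((2 * |(m : ℝ)| * D1) * (|(m : ℝ)| ^ 2 * D2)) := by
    rw [abs_mul, abs_mul, abs_pow]
    gcongr <;> first | exact hRm1 | exact hRm2 | exact abs_nonneg _
  have tZ : |2 * ((n : ℝ) * (m : ℝ) ^ 2) * (δ * Rn)|
      ≤ 2 * (|(n : ℝ)| * |(m : ℝ)| ^ 2) * (D1 * (|(n : ℝ)| ^ 2 * D2)) := by
    rw [abs_mul, abs_mul, abs_mul, abs_mul, abs_pow, abs_two]
    gcongr <;> first | exact hδ | exact hRn2 | exact abs_nonneg _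
  have tW : |(m : ℝ) ^ 2 * (Rn * Rn)|
      ≤ |(m : ℝ)| ^ 2 * ((2 * |(n : ℝ)| * D1) * (|(n : ℝ)| ^ 2 * D2)) := by
    rw [abs_mul, abs_mul, abs_pow]
    gcongr <;> first | exact hRn1 | exact hRn2 | exact abs_nonneg _
  have tri : |2 * ((m : ℝ) * (n : ℝ) ^ 2) * (δ * Rm) + (n : ℝ) ^ 2 * (Rm * Rm)
        - 2 * ((n : ℝ) * (m : ℝ) ^ 2) * (δ * Rn) - (m : ℝ) ^ 2 * (Rn * Rn)|
      ≤ |2 * ((m : ℝ) * (n : ℝ) ^ 2) * (δ * Rm)| + |(n : ℝ) ^ 2 * (Rm * Rm)|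
        + |2 * ((n : ℝ) * (m : ℝ) ^ 2) * (δ * Rn)| + |(m : ℝ) ^ 2 * (Rn * Rn)| := by
    refine le_trans (abs_sub _ _) ?_
    refine add_le_add (le_trans (abs_sub _ _) (add_le_add (abs_add_le _ _) le_rfl)) le_rfl
  have hDD : 0 ≤ D2 * D1 := mul_nonneg hD2 hD1
  nlinarith [tri, tX, tY, tZ, tW, hDD]
end

section
/- Fix d ≠ 0 and coefficients (a_k)_{k=-N}^{N}. If θ : [0,∞) → ℓ^∞(ℤ) is a C¹ solution of the nonlinear lattice equation θ̇_l = (1/d) Σ_{k=-N}^{N} a_k (e^{d(θ_{l+k} - θ_l)} - 1) + c, then the function h(t) ∈ ℓ^∞(ℤ) defined pointwise by h_l(t) = e^{d(θ_l(t) - c t)} is a C¹ solution of the linear lattice equation ḣ_l = Σ_{k=-N}^{N} a_k (h_{l+k} - h_l). Conversely, if h is a C¹ solution of the linear equation with h_l(t) > 0 for all l and t, then θ_l(t) = (log h_l(t))/d + c t solves the nonlinear equation. -/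
/-- Discrete Cole–Hopf transformation: if `θ` solves
`θ̇_l = (1/d)∑_k a_k (e^{d(θ_{l+k}-θ_l)} - 1) + c` then
`h_l(t) = e^{d(θ_l(t) - ct)}` solves the linear equation
`ḣ_l = ∑_k a_k (h_{l+k} - h_l)`; conversely any positive solution `h` of the
linear equation yields a solution `θ_l = (log h_l)/d + ct` of the nonlinear
equation. -/
theorem stmt10 (N : ℕ) (a : ℤ → ℝ) (c d : ℝ) (hd : d ≠ 0) :
    (∀ θ : ℝ → ℤ → ℝ,
      (∀ (l : ℤ) (t : ℝ), 0 ≤ t → HasDerivAt (fun s => θ s l)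
        ((1 / d) * ∑ k ∈ Finset.Icc (-(N : ℤ)) (N : ℤ),
            a k * (Real.exp (d * (θ t (l + k) - θ t l)) - 1) + c) t) →
      ∀ (l : ℤ) (t : ℝ), 0 ≤ t →
        HasDerivAt (fun s => Real.exp (d * (θ s l - c * s)))
          (∑ k ∈ Finset.Icc (-(N : ℤ)) (N : ℤ),
            a k * (Real.exp (d * (θ t (l + k) - c * t)) -
                   Real.exp (d * (θ t l - c * t)))) t)
    ∧
    (∀ h : ℝ → ℤ → ℝ,
      (∀ (l : ℤ) (t : ℝ), 0 < h t l) →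
      (∀ (l : ℤ) (t : ℝ), 0 ≤ t → HasDerivAt (fun s => h s l)
        (∑ k ∈ Finset.Icc (-(N : ℤ)) (N : ℤ), a k * (h t (l + k) - h t l)) t) →
      ∀ (l : ℤ) (t : ℝ), 0 ≤ t →
        HasDerivAt (fun s => Real.log (h s l) / d + c * s)
          ((1 / d) * ∑ k ∈ Finset.Icc (-(N : ℤ)) (N : ℤ),
              a k * (Real.exp (d * ((Real.log (h t (l + k)) / d + c * t)
                - (Real.log (h t l) / d + c * t))) - 1) + c) t) := by
  constructor
  · intro θ hθ l t ht
    set S := ∑ k ∈ Finset.Icc (-(N : ℤ)) (N : ℤ),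
        a k * (Real.exp (d * (θ t (l + k) - θ t l)) - 1) with hS
    have hc : HasDerivAt (fun s : ℝ => c * s) (c * 1) t := (hasDerivAt_id t).const_mul c
    have h1 : HasDerivAt (fun s => d * (θ s l - c * s))
        (d * ((1 / d) * S + c - c * 1)) t := ((hθ l t ht).sub hc).const_mul d
    have h2 := h1.exp
    convert h2 using 1
    have hdd : d * ((1 / d) * S + c - c * 1) = S := by field_simp; ring
    rw [hdd, Finset.mul_sum]
    refine Finset.sum_congr rfl fun k _ => ?_
    have key : Real.exp (d * (θ t (l + k) - θ t l)) * Real.exp (d * (θ t l - c * t))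
        = Real.exp (d * (θ t (l + k) - c * t)) := by
      rw [← Real.exp_add]; congr 1; ring
    rw [← key]; ring
  · intro h hpos hh l t ht
    have hc : HasDerivAt (fun s : ℝ => c * s) (c * 1) t := (hasDerivAt_id t).const_mul c
    set S := ∑ k ∈ Finset.Icc (-(N : ℤ)) (N : ℤ), a k * (h t (l + k) - h t l) with hS
    have h1 : HasDerivAt (fun s => Real.log (h s l) / d + c * s)
        (S / h t l / d + c * 1) t :=
      (((hh l t ht).log (ne_of_gt (hpos l t))).div_const d).add hc
    convert h1 using 1
    have hterm : ∀ k, Real.exp (d * ((Real.log (h t (l + k)) / d + c * t)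
        - (Real.log (h t l) / d + c * t))) = h t (l + k) / h t l := by
      intro k
      have : d * ((Real.log (h t (l + k)) / d + c * t)
          - (Real.log (h t l) / d + c * t)) = Real.log (h t (l + k)) - Real.log (h t l) := by
        field_simp
        ring
      rw [this, Real.exp_sub, Real.exp_log (hpos l t), Real.exp_log (hpos _ t)]
    have hsum : ∑ k ∈ Finset.Icc (-(N : ℤ)) (N : ℤ),
        a k * (Real.exp (d * ((Real.log (h t (l + k)) / d + c * t)
          - (Real.log (h t l) / d + c * t))) - 1) = S / h t l := by
      rw [hS, Finset.sum_div]
      refine Finset.sum_congr rfl fun k _ => ?_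
      rw [hterm k, div_sub_one (ne_of_gt (hpos l t)), mul_div_assoc]
    rw [hsum, mul_one]
    ring
end

section
/- Suppose the nonlinearity Θ_ch on ℓ^∞(ℤ) is given by [Θ_ch(θ)]_l = (1/d) Σ_{k=-N}^{N} a_k (e^{d(θ_{l+k} - θ_l)} - 1) + c for d ≠ 0. Then there exists a constant C > 0 such that for all θ ∈ ℓ^∞(ℤ) with ‖∂θ‖_∞ ≤ 1, the third-order Taylor estimate ‖Θ_ch(θ) - H_lin[θ] - d Q_ch(θ) - c‖_∞ ≤ C e^{2N|d| ‖∂θ‖_∞} ‖∂θ‖_∞³ holds, where [H_lin[θ]]_l = Σ_k a_k (θ_{l+k} - θ_l) and [Q_ch(θ)]_l = (1/2) Σ_k a_k (θ_{l+k} - θ_l)². -/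
lemma taylor3 (x : ℝ) : |Real.exp x - 1 - x - x^2/2| ≤ 5 * |x|^3 * Real.exp |x| := by
  rcases le_or_gt |x| 1 with h | h
  · have hb := Real.exp_bound h (by norm_num : 0 < 3)
    simp [Finset.sum_range_succ] at hb
    have h1 : (1:ℝ) ≤ Real.exp |x| := Real.one_le_exp (abs_nonneg x)
    have h3 : (0:ℝ) ≤ |x|^3 := by positivity
    have h4 : |Real.exp x - 1 - x - x^2/2| ≤ |x|^3 * (4/18) := by
      convert hb using 2
      · ring
      · norm_num [Nat.factorial]
    nlinarith
  · have e1 : Real.exp x ≤ Real.exp |x| := Real.exp_le_exp.2 (le_abs_self x)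
    have e2 : (1:ℝ) ≤ Real.exp |x| := Real.one_le_exp (abs_nonneg x)
    have e3 : |x| + 1 ≤ Real.exp |x| := Real.add_one_le_exp |x|
    have e4 : (0:ℝ) < Real.exp x := Real.exp_pos x
    have e5 : x^2 ≤ 4 * Real.exp |x| := by
      have h2 : Real.exp |x| = (Real.exp (|x|/2))^2 := by
        rw [sq, ← Real.exp_add]; ring_nf
      have h3 := Real.add_one_le_exp (|x|/2)
      have h4 : (0:ℝ) ≤ |x|/2 := by positivity
      nlinarith [sq_abs x]
    have h5 : (1:ℝ) ≤ |x|^2 := by nlinarith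
    have h6 : (1:ℝ) ≤ |x|^3 := by nlinarith [abs_nonneg x]
    have h7 : |x| ≤ |x|^3 := by nlinarith [abs_nonneg x]
    rw [abs_le]
    constructor <;> nlinarith [le_abs_self x, neg_abs_le x, sq_abs x, abs_nonneg x,
      mul_le_mul_of_nonneg_left e2 (by positivity : (0:ℝ) ≤ |x|^3)]

lemma step_bound (θ : ℤ → ℝ) (D : ℝ) (h : ∀ l : ℤ, |θ (l + 1) - θ l| ≤ D)
    (l : ℤ) : ∀ k : ℤ, |θ (l + k) - θ l| ≤ |(k:ℝ)| * D := by
  have hD : 0 ≤ D := (abs_nonneg _).trans (h l)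
  intro k
  induction k using Int.induction_on with
  | zero => simp
  | succ n ih =>
    have h1 := h (l + n)
    have e : θ (l + ((n:ℤ) + 1)) - θ l = (θ (l + n + 1) - θ (l + n)) + (θ (l + n) - θ l) := by
      ring_nf
    rw [e]
    have hn2 : |((n:ℤ):ℝ)| = (n:ℝ) := abs_of_nonneg (by positivity)
    rw [hn2] at ih
    have hn1 : |(((n:ℤ) + 1 : ℤ):ℝ)| = ((n:ℝ) + 1) := by
      push_cast; exact abs_of_nonneg (by positivity)
    rw [hn1]
    calc |(θ (l + n + 1) - θ (l + n)) + (θ (l + n) - θ l)|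
        ≤ |θ (l + n + 1) - θ (l + n)| + |θ (l + n) - θ l| := abs_add_le _ _
      _ ≤ D + (n:ℝ) * D := add_le_add h1 ih
      _ = ((n:ℝ) + 1) * D := by ring
  | pred n ih =>
    have h1 := h (l + (-(n:ℤ) - 1))
    have e : l + (-(n:ℤ) - 1) + 1 = l + (-(n:ℤ)) := by ring
    rw [e] at h1
    have e2 : θ (l + (-(n:ℤ) - 1)) - θ l
        = -(θ (l + (-(n:ℤ))) - θ (l + (-(n:ℤ) - 1))) + (θ (l + (-(n:ℤ))) - θ l) := by ring
    have hn2 : |((-(n:ℤ) : ℤ):ℝ)| = (n:ℝ) := by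
      push_cast; rw [abs_neg]; exact abs_of_nonneg (by positivity)
    rw [hn2] at ih
    have hn1 : |((-(n:ℤ) - 1 : ℤ):ℝ)| = ((n:ℝ) + 1) := by
      push_cast
      rw [show -(n:ℝ) - 1 = -((n:ℝ) + 1) by ring, abs_neg]
      exact abs_of_nonneg (by positivity)
    rw [e2, hn1]
    calc |(-(θ (l + (-(n:ℤ))) - θ (l + (-(n:ℤ) - 1)))) + (θ (l + (-(n:ℤ))) - θ l)|
        ≤ |(-(θ (l + (-(n:ℤ))) - θ (l + (-(n:ℤ) - 1))))| + |θ (l + (-(n:ℤ))) - θ l| := abs_add_le _ _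
      _ ≤ D + (n:ℝ) * D := by
          rw [abs_neg]
          exact add_le_add h1 ih
      _ = ((n:ℝ) + 1) * D := by ring

/-- Third-order Taylor estimate for the Cole–Hopf nonlinearity: with
`[Θ_ch(θ)]_l = (1/d)∑_k a_k(e^{d(θ_{l+k}-θ_l)}-1) + c`,
`[H_lin θ]_l = ∑_k a_k(θ_{l+k}-θ_l)` and
`[Q_ch θ]_l = (1/2)∑_k a_k(θ_{l+k}-θ_l)²`, there is `C > 0` so that whenever
`‖∂θ‖_∞ ≤ D ≤ 1`,
`‖Θ_ch(θ) - H_lin[θ] - d·Q_ch(θ) - c‖_∞ ≤ C e^{2N|d|D} D³`. -/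
theorem stmt18 (N : ℕ) (a : ℤ → ℝ) (c d : ℝ) (hd : d ≠ 0) :
    ∃ C : ℝ, 0 < C ∧ ∀ θ : ℤ → ℝ, ∀ D : ℝ,
      (∀ l : ℤ, |θ (l + 1) - θ l| ≤ D) → D ≤ 1 →
      ∀ l : ℤ,
        |((1 / d) * (∑ k ∈ Finset.Icc (-(N : ℤ)) (N : ℤ),
              a k * (Real.exp (d * (θ (l + k) - θ l)) - 1)) + c)
          - (∑ k ∈ Finset.Icc (-(N : ℤ)) (N : ℤ), a k * (θ (l + k) - θ l))
          - d * ((1 / 2) * ∑ k ∈ Finset.Icc (-(N : ℤ)) (N : ℤ),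
              a k * (θ (l + k) - θ l) ^ 2)
          - c|
        ≤ C * Real.exp (2 * (N : ℝ) * |d| * D) * D ^ 3 := by
  set s : Finset ℤ := Finset.Icc (-(N : ℤ)) (N : ℤ) with hs
  set S : ℝ := ∑ k ∈ s, |a k| with hSdef
  have hS : 0 ≤ S := Finset.sum_nonneg fun k _ => abs_nonneg _
  have hA : (0:ℝ) < |d| := abs_pos.2 hd
  refine ⟨5 * S * |d|^2 * (N:ℝ)^3 + 1, by positivity, ?_⟩
  intro θ D h hD1 l
  have hD0 : (0:ℝ) ≤ D := (abs_nonneg _).trans (h 0)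
  have hM0 : (0:ℝ) ≤ |d| * ((N:ℝ) * D) := by positivity
  set M : ℝ := |d| * ((N:ℝ) * D) with hM
  set g : ℤ → ℝ := fun k =>
    a k * (Real.exp (d * (θ (l + k) - θ l)) - 1 - d * (θ (l + k) - θ l)
      - (d * (θ (l + k) - θ l))^2 / 2) with hg
  have heq : ((1 / d) * (∑ k ∈ s, a k * (Real.exp (d * (θ (l + k) - θ l)) - 1)) + c)
      - (∑ k ∈ s, a k * (θ (l + k) - θ l))
      - d * ((1 / 2) * ∑ k ∈ s, a k * (θ (l + k) - θ l) ^ 2) - c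
      = (1 / d) * ∑ k ∈ s, g k := by
    have hA2 : ∑ k ∈ s, g k
        = (∑ k ∈ s, a k * (Real.exp (d * (θ (l + k) - θ l)) - 1))
          - d * (∑ k ∈ s, a k * (θ (l + k) - θ l))
          - d^2 * ((1/2) * ∑ k ∈ s, a k * (θ (l + k) - θ l) ^ 2) := by
      simp only [Finset.mul_sum, ← Finset.sum_sub_distrib]
      exact Finset.sum_congr rfl fun k _ => by simp only [hg]; ring
    rw [hA2]
    field_simp
    ring
  rw [heq, abs_mul]
  have hterm : ∀ k ∈ s, |g k| ≤ |a k| * (5 * M^3 * Real.exp M) := by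
    intro k hk
    have hk' : |(k:ℝ)| ≤ (N:ℝ) := by
      rw [Finset.mem_Icc] at hk
      rw [abs_le]
      constructor <;> [exact_mod_cast hk.1; exact_mod_cast hk.2]
    have ht : |θ (l + k) - θ l| ≤ (N:ℝ) * D :=
      (step_bound θ D h l k).trans (mul_le_mul_of_nonneg_right hk' hD0)
    have hx : |d * (θ (l + k) - θ l)| ≤ M := by
      rw [abs_mul, hM]
      exact mul_le_mul_of_nonneg_left ht (abs_nonneg d)
    have hb := taylor3 (d * (θ (l + k) - θ l))
    have hmono : 5 * |d * (θ (l + k) - θ l)|^3 * Real.exp |d * (θ (l + k) - θ l)|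
        ≤ 5 * M^3 * Real.exp M := by
      gcongr
    calc |g k| = |a k| * |Real.exp (d * (θ (l + k) - θ l)) - 1 - d * (θ (l + k) - θ l)
          - (d * (θ (l + k) - θ l))^2 / 2| := by rw [hg]; exact abs_mul _ _
      _ ≤ |a k| * (5 * M^3 * Real.exp M) :=
          mul_le_mul_of_nonneg_left (hb.trans hmono) (abs_nonneg _)
  calc |1/d| * |∑ k ∈ s, g k|
      ≤ |1/d| * ∑ k ∈ s, |g k| := by
        gcongr
        exact Finset.abs_sum_le_sum_abs _ _
    _ ≤ |1/d| * ∑ k ∈ s, |a k| * (5 * M^3 * Real.exp M) := by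
        gcongr with k hk
        exact hterm k hk
    _ = |1/d| * (S * (5 * M^3 * Real.exp M)) := by rw [← Finset.sum_mul]
    _ = 5 * S * |d|^2 * (N:ℝ)^3 * D^3 * Real.exp M := by
        rw [abs_div, abs_one, hM]
        field_simp
    _ ≤ (5 * S * |d|^2 * (N:ℝ)^3 + 1) * Real.exp (2 * (N:ℝ) * |d| * D) * D ^ 3 := by
        have hE : Real.exp M ≤ Real.exp (2 * (N:ℝ) * |d| * D) := by
          rw [Real.exp_le_exp, hM]
          nlinarith [hM0]
        have hE2 : (0:ℝ) < Real.exp (2 * (N:ℝ) * |d| * D) := Real.exp_pos _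
        have ha : (0:ℝ) ≤ 5 * S * |d|^2 * (N:ℝ)^3 := by positivity
        have hD3 : (0:ℝ) ≤ D^3 := by positivity
        nlinarith [mul_le_mul_of_nonneg_left hE (mul_nonneg ha hD3)]
end

section
/- Let Φ : ℝ → ℝ be C¹ with strictly positive derivative, satisfying the traveling wave equation -cΦ'(ξ) = Σ_{ν=1}^4 Φ(ξ + τ_ν) - 4Φ(ξ) + g(Φ(ξ)) for all ξ ∈ ℝ, where c ≠ 0, τ_ν ∈ ℤ, and g ∈ C¹. Let ψ : ℝ → ℝ be bounded, positive, with ∫ ψ Φ' = 1, spanning the kernel of the formal adjoint, so that ∫ ψ(ξ)[L₀ v](ξ) dξ = 0 for all admissible v, where [L₀v](ξ) = cv'(ξ) + Σ_ν v(ξ+τ_ν) - 4v(ξ) + g'(Φ(ξ))v(ξ). Then applying L₀ to χ(ξ) = ξΦ'(ξ) yields [L₀χ](ξ) = cΦ'(ξ) + Σ_ν τ_ν Φ'(ξ+τ_ν), and consequently c = -Σ_{ν=1}^4 τ_ν ∫ ψ(ξ) Φ'(ξ+τ_ν) dξ. -/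
open MeasureTheory

/-- Wave speed via the solvability condition: if `(c,Φ)` solves the traveling
wave MFDE `-cΦ'(ξ) = ∑_ν Φ(ξ+τ_ν) - 4Φ(ξ) + g(Φ(ξ))` with `c ≠ 0`, `Φ' > 0`,
and `ψ > 0` is bounded with `∫ψΦ' = 1` and annihilates the range of the
linearization `L₀`, then for `χ(ξ) = ξΦ'(ξ)` one has
`[L₀χ](ξ) = cΦ'(ξ) + ∑_ν τ_ν Φ'(ξ+τ_ν)`, and consequently
`c = -∑_ν τ_ν ∫ ψ(ξ) Φ'(ξ+τ_ν) dξ`. -/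
theorem stmt19 (c : ℝ) (hc : c ≠ 0) (τ : Fin 4 → ℤ)
    (g g' : ℝ → ℝ) (hg : ∀ x, HasDerivAt g (g' x) x)
    (Φ Φ' Φ'' : ℝ → ℝ)
    (hΦ : ∀ ξ, HasDerivAt Φ (Φ' ξ) ξ)
    (hΦ' : ∀ ξ, HasDerivAt Φ' (Φ'' ξ) ξ)
    (hΦpos : ∀ ξ, 0 < Φ' ξ)
    (hwave : ∀ ξ : ℝ, -c * Φ' ξ =
      (∑ ν : Fin 4, Φ (ξ + (τ ν : ℝ))) - 4 * Φ ξ + g (Φ ξ))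
    (ψ : ℝ → ℝ) (hψpos : ∀ ξ, 0 < ψ ξ) (hψbdd : ∃ C : ℝ, ∀ ξ, |ψ ξ| ≤ C)
    (hnorm : (∫ ξ : ℝ, ψ ξ * Φ' ξ) = 1)
    (hker : ∀ v v' : ℝ → ℝ, (∀ ξ, HasDerivAt v (v' ξ) ξ) →
      Integrable (fun ξ : ℝ => ψ ξ *
        (c * v' ξ + (∑ ν : Fin 4, v (ξ + (τ ν : ℝ))) - 4 * v ξ
          + g' (Φ ξ) * v ξ)) →
      (∫ ξ : ℝ, ψ ξ *
        (c * v' ξ + (∑ ν : Fin 4, v (ξ + (τ ν : ℝ))) - 4 * v ξ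
          + g' (Φ ξ) * v ξ)) = 0)
    (hint : ∀ ν : Fin 4,
      Integrable (fun ξ : ℝ => ψ ξ * Φ' (ξ + (τ ν : ℝ)))) :
    (∀ ξ : ℝ,
      c * (Φ' ξ + ξ * Φ'' ξ) + (∑ ν : Fin 4, (ξ + (τ ν : ℝ)) * Φ' (ξ + (τ ν : ℝ)))
          - 4 * (ξ * Φ' ξ) + g' (Φ ξ) * (ξ * Φ' ξ)
        = c * Φ' ξ + ∑ ν : Fin 4, (τ ν : ℝ) * Φ' (ξ + (τ ν : ℝ))) ∧
    c = -∑ ν : Fin 4, (τ ν : ℝ) * ∫ ξ : ℝ, ψ ξ * Φ' (ξ + (τ ν : ℝ)) := by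
  -- Differentiate the wave equation
  have hderiv : ∀ ξ : ℝ, -c * Φ'' ξ =
      (∑ ν : Fin 4, Φ' (ξ + (τ ν : ℝ))) - 4 * Φ' ξ + g' (Φ ξ) * Φ' ξ := by
    intro ξ
    have h1 : HasDerivAt (fun ξ : ℝ => -c * Φ' ξ) (-c * Φ'' ξ) ξ :=
      (hΦ' ξ).const_mul (-c)
    have h2 : HasDerivAt (fun ξ : ℝ =>
        (∑ ν : Fin 4, Φ (ξ + (τ ν : ℝ))) - 4 * Φ ξ + g (Φ ξ))
        ((∑ ν : Fin 4, Φ' (ξ + (τ ν : ℝ))) - 4 * Φ' ξ + g' (Φ ξ) * Φ' ξ) ξ := by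
      have hsum : HasDerivAt (fun ξ : ℝ => ∑ ν : Fin 4, Φ (ξ + (τ ν : ℝ)))
          (∑ ν : Fin 4, Φ' (ξ + (τ ν : ℝ))) ξ := by
        apply HasDerivAt.fun_sum
        intro ν _
        have := (hΦ (ξ + (τ ν : ℝ))).comp ξ
          ((hasDerivAt_id ξ).add_const ((τ ν : ℝ)))
        simpa [Function.comp_def] using this
      exact (hsum.sub ((hΦ ξ).const_mul 4)).add ((hg (Φ ξ)).comp ξ (hΦ ξ))
    have hfeq : (fun ξ : ℝ => -c * Φ' ξ) = fun ξ : ℝ =>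
        (∑ ν : Fin 4, Φ (ξ + (τ ν : ℝ))) - 4 * Φ ξ + g (Φ ξ) := funext hwave
    exact (hfeq ▸ h1).unique h2
  have part1 : ∀ ξ : ℝ,
      c * (Φ' ξ + ξ * Φ'' ξ) + (∑ ν : Fin 4, (ξ + (τ ν : ℝ)) * Φ' (ξ + (τ ν : ℝ)))
          - 4 * (ξ * Φ' ξ) + g' (Φ ξ) * (ξ * Φ' ξ)
        = c * Φ' ξ + ∑ ν : Fin 4, (τ ν : ℝ) * Φ' (ξ + (τ ν : ℝ)) := by
    intro ξ
    have expand : (∑ ν : Fin 4, (ξ + (τ ν : ℝ)) * Φ' (ξ + (τ ν : ℝ)))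
        = ξ * (∑ ν : Fin 4, Φ' (ξ + (τ ν : ℝ)))
          + ∑ ν : Fin 4, (τ ν : ℝ) * Φ' (ξ + (τ ν : ℝ)) := by
      rw [Finset.mul_sum, ← Finset.sum_add_distrib]
      exact Finset.sum_congr rfl fun ν _ => by ring
    have := hderiv ξ
    rw [expand]; linarith [mul_right_cancel₀ (c := (1:ℝ)) one_ne_zero rfl,
      congrArg (fun t => ξ * t) this]
  refine ⟨part1, ?_⟩
  -- Integrability of ψ Φ'
  have hψΦ' : Integrable (fun ξ : ℝ => ψ ξ * Φ' ξ) := by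
    by_contra h
    rw [integral_undef h] at hnorm
    exact one_ne_zero hnorm.symm
  -- apply hker to χ(ξ) = ξ Φ'(ξ)
  have hχ : ∀ ξ : ℝ, HasDerivAt (fun ξ : ℝ => ξ * Φ' ξ) (Φ' ξ + ξ * Φ'' ξ) ξ := by
    intro ξ
    have := (hasDerivAt_id ξ).mul (hΦ' ξ)
    simpa [Pi.mul_def] using this
  have hpt : ∀ ξ : ℝ, ψ ξ *
      (c * (Φ' ξ + ξ * Φ'' ξ) + (∑ ν : Fin 4, (ξ + (τ ν : ℝ)) * Φ' (ξ + (τ ν : ℝ)))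
        - 4 * (ξ * Φ' ξ) + g' (Φ ξ) * (ξ * Φ' ξ))
      = c * (ψ ξ * Φ' ξ) + ∑ ν : Fin 4, (τ ν : ℝ) * (ψ ξ * Φ' (ξ + (τ ν : ℝ))) := by
    intro ξ
    rw [part1 ξ, mul_add, Finset.mul_sum]
    congr 1
    · ring
    · exact Finset.sum_congr rfl fun ν _ => by ring
  have hintegrable : Integrable (fun ξ : ℝ =>
      c * (ψ ξ * Φ' ξ) + ∑ ν : Fin 4, (τ ν : ℝ) * (ψ ξ * Φ' (ξ + (τ ν : ℝ)))) :=
    (hψΦ'.const_mul c).add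
      (integrable_finset_sum _ fun ν _ => (hint ν).const_mul ((τ ν : ℝ)))
  have hintegrable' : Integrable (fun ξ : ℝ => ψ ξ *
      (c * (Φ' ξ + ξ * Φ'' ξ) + (∑ ν : Fin 4, (ξ + (τ ν : ℝ)) * Φ' (ξ + (τ ν : ℝ)))
        - 4 * (ξ * Φ' ξ) + g' (Φ ξ) * (ξ * Φ' ξ))) := by
    refine hintegrable.congr ?_
    filter_upwards with ξ
    exact (hpt ξ).symm
  have hzero := hker (fun ξ => ξ * Φ' ξ) (fun ξ => Φ' ξ + ξ * Φ'' ξ) hχ hintegrable'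
  have heq : (∫ ξ : ℝ, ψ ξ *
      (c * (Φ' ξ + ξ * Φ'' ξ) + (∑ ν : Fin 4, (ξ + (τ ν : ℝ)) * Φ' (ξ + (τ ν : ℝ)))
        - 4 * (ξ * Φ' ξ) + g' (Φ ξ) * (ξ * Φ' ξ)))
      = c + ∑ ν : Fin 4, (τ ν : ℝ) * ∫ ξ : ℝ, ψ ξ * Φ' (ξ + (τ ν : ℝ)) := by
    rw [integral_congr_ae (Filter.Eventually.of_forall hpt),
      integral_add (hψΦ'.const_mul c)
        (integrable_finset_sum _ fun ν _ => (hint ν).const_mul ((τ ν : ℝ))),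
      integral_const_mul, hnorm, mul_one,
      integral_finset_sum _ fun ν _ => (hint ν).const_mul ((τ ν : ℝ))]
    congr 1
    exact Finset.sum_congr rfl fun ν _ => integral_const_mul _ _
  rw [hzero] at heq
  linarith
end
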